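/- Let g ∈ F_2[X] be a product of distinct irreducible polynomials g_1, ..., g_e of degrees d_1 ≤ d_2 ≤ ... ≤ d_e, dividing X^n - 1, where g_1 is irreducible but not primitive (its order is strictly less than 2^{d_1} - 1). Then the burst-covering radius b of the cyclic code generated by g, defined as b = max_{f ≠ 0, deg f < r} min_{k≥0} deg(X^k f mod g) + 1 with r = deg g, satisfies b ≥ r - d_1 + 2. -/

import Mathlib

open Polynomial

/-- If the minimum-degree irreducible factor `g 0` (of degree `d₁`) of the
squarefree generator polynomial `G` of a binary cyclic code is not primitive
(i.e. `g 0` divides `X^n₀ - 1` for some `0 < n₀ < 2^d₁ - 1`), then the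
burst-covering radius satisfies `b ≥ r - d₁ + 2`. -/
theorem stmt14 (n e r : ℕ) (hn : 0 < n) (he : 0 < e)
    (g : Fin e → Polynomial (ZMod 2))
    (hirr : ∀ i, Irreducible (g i)) (hinj : Function.Injective g)
    (hmin : ∀ i : Fin e, (g ⟨0, he⟩).natDegree ≤ (g i).natDegree)
    (G : Polynomial (ZMod 2)) (hG : G = ∏ i : Fin e, g i)
    (hr : G.natDegree = r) (hdvd : G ∣ X ^ n - 1)
    (hnonprim : ∃ n₀ : ℕ, 0 < n₀ ∧ n₀ < 2 ^ (g ⟨0, he⟩).natDegree - 1 ∧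
      g ⟨0, he⟩ ∣ X ^ n₀ - 1)
    (b : ℕ)
    (hb : b = sSup {v : ℕ | ∃ f : Polynomial (ZMod 2), f ≠ 0 ∧ f.natDegree < r ∧
      v = sInf {w : ℕ | ∃ k : ℕ, w = ((X ^ k * f) % G).natDegree + 1}}) :
    b ≥ r - (g ⟨0, he⟩).natDegree + 2 := by
  classical
  obtain ⟨n₀, hn₀pos, hn₀lt, hdvd₀⟩ := hnonprim
  set g₀ : Polynomial (ZMod 2) := g ⟨0, he⟩ with hg₀def
  have hirr₀ : Irreducible g₀ := hirr _
  haveI : Fact (Irreducible g₀) := ⟨hirr₀⟩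
  set d := g₀.natDegree with hddef
  have hg₀ne : g₀ ≠ 0 := hirr₀.ne_zero
  -- every nonzero polynomial over ZMod 2 is monic
  have h2 : ∀ a : ZMod 2, a ≠ 0 → a = 1 := by decide
  have hmo : ∀ p : Polynomial (ZMod 2), p ≠ 0 → p.Monic := fun p hp =>
    h2 _ (Polynomial.leadingCoeff_ne_zero.mpr hp)
  have hmod_eq : ∀ p q : Polynomial (ZMod 2), q ≠ 0 → p % q = p %ₘ q := fun p q hq =>
    (Polynomial.modByMonic_eq_mod p (hmo q hq)).symm
  -- the cofactor h
  set h : Polynomial (ZMod 2) := ∏ i ∈ Finset.univ.erase ⟨0, he⟩, g i with hhdef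
  have hGfact : G = g₀ * h := by
    rw [hG, hhdef, ← Finset.mul_prod_erase _ _ (Finset.mem_univ (⟨0, he⟩ : Fin e))]
  have hhne : h ≠ 0 := Finset.prod_ne_zero_iff.mpr fun i _ => (hirr i).ne_zero
  have hGne : G ≠ 0 := by rw [hGfact]; exact mul_ne_zero hg₀ne hhne
  have hGdeg : d + h.natDegree = r := by
    rw [← hr, hGfact, Polynomial.natDegree_mul hg₀ne hhne]
  -- d ≥ 2
  have hd2 : 2 ≤ d := by
    by_contra hc
    push_neg at hc
    interval_cases d <;> omega
  have hr2 : 2 ≤ r := le_trans hd2 (by omega)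
  -- the field K = F₂[X]/(g₀)
  set K := AdjoinRoot g₀ with hKdef
  haveI : Fintype K := Module.fintypeOfFintype (AdjoinRoot.powerBasis hg₀ne).basis
  have hcardK : Fintype.card K = 2 ^ d := by
    rw [Module.card_fintype (AdjoinRoot.powerBasis hg₀ne).basis, ZMod.card, Fintype.card_fin,
      AdjoinRoot.powerBasis_dim]
  have hcardKx : Fintype.card Kˣ = 2 ^ d - 1 := by
    rw [Fintype.card_units, hcardK]
  -- the root x
  set x : K := AdjoinRoot.root g₀ with hxdef
  have hxpow : x ^ n₀ = 1 := by
    obtain ⟨q, hq⟩ := hdvd₀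
    have := congrArg (AdjoinRoot.mk g₀) hq
    rw [map_mul, AdjoinRoot.mk_self, zero_mul, map_sub, map_pow, AdjoinRoot.mk_X,
      map_one, sub_eq_zero] at this
    exact this
  have hxne : x ≠ 0 := by
    intro hx0
    rw [hx0, zero_pow hn₀pos.ne'] at hxpow
    exact zero_ne_one hxpow
  set xu : Kˣ := Units.mk0 x hxne with hxudef
  have hxupow : xu ^ n₀ = 1 := by
    ext
    rw [Units.val_pow_eq_pow_val]
    exact hxpow
  have hord : orderOf xu ≤ n₀ := orderOf_le_of_pow_eq_one hn₀pos hxupow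
  -- find a unit outside ⟨x⟩
  have hex : ∃ yu : Kˣ, yu ∉ Subgroup.zpowers xu := by
    by_contra hc
    push_neg at hc
    have htop : Subgroup.zpowers xu = ⊤ := Subgroup.eq_top_iff' _ |>.mpr hc
    have : orderOf xu = Fintype.card Kˣ := by
      rw [← Nat.card_zpowers, htop, ← Nat.card_eq_fintype_card]
      exact Subgroup.card_top
    omega
  obtain ⟨yu, hyu⟩ := hex
  set y : K := yu.val with hydef
  have hyne : y ≠ 0 := yu.ne_zero
  -- lift y to a polynomial u of degree < d
  obtain ⟨p, hp⟩ := AdjoinRoot.mk_surjective (g := g₀) y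
  set u : Polynomial (ZMod 2) := p %ₘ g₀ with hudef
  have hmku : AdjoinRoot.mk g₀ u = y := by
    rw [← hp]
    apply (AdjoinRoot.mk_eq_mk).mpr
    exact ⟨-(p /ₘ g₀), by rw [hudef, Polynomial.modByMonic_eq_sub_mul_div p g₀]; ring⟩
  have hune : u ≠ 0 := by
    intro h0
    rw [h0, map_zero] at hmku
    exact hyne hmku.symm
  have hudeg : u.degree < g₀.degree := Polynomial.degree_modByMonic_lt p (hmo _ hg₀ne)
  have hudegn : u.natDegree < d :=
    Polynomial.natDegree_lt_natDegree hune hudeg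
  -- the witness f
  set f : Polynomial (ZMod 2) := h * u with hfdef
  have hfne : f ≠ 0 := mul_ne_zero hhne hune
  have hfdeg : f.natDegree < r := by
    rw [hfdef, Polynomial.natDegree_mul hhne hune]
    omega
  -- values of mk on X^k * u
  have hmk : ∀ k : ℕ, AdjoinRoot.mk g₀ (X ^ k * u) = x ^ k * y := by
    intro k
    rw [map_mul, map_pow, AdjoinRoot.mk_X, hmku]
  -- s k is nonzero
  have hsne : ∀ k : ℕ, (X ^ k * u) %ₘ g₀ ≠ 0 := by
    intro k h0
    have : g₀ ∣ X ^ k * u := (Polynomial.modByMonic_eq_zero_iff_dvd (hmo _ hg₀ne)).mp h0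
    have h0' : AdjoinRoot.mk g₀ (X ^ k * u) = 0 := by
      obtain ⟨c, hc⟩ := this
      rw [hc, map_mul, AdjoinRoot.mk_self, zero_mul]
    rw [hmk k] at h0'
    exact (mul_ne_zero (pow_ne_zero k hxne) hyne) h0'
  -- s k has degree ≥ 1
  have hsdeg : ∀ k : ℕ, 1 ≤ ((X ^ k * u) %ₘ g₀).natDegree := by
    intro k
    by_contra hc
    push_neg at hc
    have h0 : ((X ^ k * u) %ₘ g₀).natDegree = 0 := by omega
    obtain ⟨c, hcc⟩ := Polynomial.natDegree_eq_zero.mp h0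
    have hcne : c ≠ 0 := by
      intro hc0
      exact hsne k (by rw [← hcc, hc0, map_zero])
    have hc1 : c = 1 := h2 c hcne
    have hs1 : (X ^ k * u) %ₘ g₀ = 1 := by rw [← hcc, hc1, map_one]
    -- then x^k * y = 1
    have hdvds : g₀ ∣ X ^ k * u - 1 := by
      rw [← hs1]
      exact ⟨(X ^ k * u) /ₘ g₀, by
        rw [Polynomial.modByMonic_eq_sub_mul_div _ g₀]; ring⟩
    have : AdjoinRoot.mk g₀ (X ^ k * u) = 1 := by
      obtain ⟨c', hc'⟩ := hdvds
      have := congrArg (AdjoinRoot.mk g₀) hc'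
      rw [map_mul, AdjoinRoot.mk_self, zero_mul, map_sub, map_one, sub_eq_zero] at this
      exact this
    rw [hmk k] at this
    -- yu = (xu^k)⁻¹ ∈ zpowers xu
    have hyuval : yu = (xu ^ k)⁻¹ := by
      refine eq_inv_of_mul_eq_one_left ?_
      ext
      rw [Units.val_mul, Units.val_pow_eq_pow_val, Units.val_one]
      show y * x ^ k = 1
      rw [mul_comm]
      exact this
    apply hyu
    rw [hyuval]
    exact Subgroup.inv_mem _ (Subgroup.pow_mem _ (Subgroup.mem_zpowers xu) k)
  -- the key mod computation
  have hkey : ∀ k : ℕ, (X ^ k * f) % G = h * ((X ^ k * u) %ₘ g₀) := by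
    intro k
    set s := (X ^ k * u) %ₘ g₀ with hsdef
    have hsnek := hsne k
    rw [hmod_eq _ _ hGne]
    have hdvdsub : G ∣ (X ^ k * f) - h * s := by
      refine ⟨(X ^ k * u) /ₘ g₀, ?_⟩
      have : X ^ k * u = g₀ * ((X ^ k * u) /ₘ g₀) + s := by
        rw [hsdef, Polynomial.modByMonic_eq_sub_mul_div _ g₀]; ring
      calc X ^ k * f - h * s = h * (X ^ k * u) - h * s := by rw [hfdef]; ring
        _ = h * (g₀ * ((X ^ k * u) /ₘ g₀) + s) - h * s := by rw [← this]
        _ = G * ((X ^ k * u) /ₘ g₀) := by rw [hGfact]; ring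
    rw [Polynomial.modByMonic_eq_of_dvd_sub (hmo _ hGne) hdvdsub]
    apply (Polynomial.modByMonic_eq_self_iff (hmo _ hGne)).mpr
    rw [hGfact, Polynomial.degree_mul, Polynomial.degree_mul]
    have hslt : s.degree < g₀.degree := Polynomial.degree_modByMonic_lt _ (hmo _ hg₀ne)
    rw [Polynomial.degree_eq_natDegree hhne, Polynomial.degree_eq_natDegree hsnek,
      Polynomial.degree_eq_natDegree hg₀ne]
    rw [Polynomial.degree_eq_natDegree hsnek, Polynomial.degree_eq_natDegree hg₀ne] at hslt
    rw [add_comm (g₀.natDegree : WithBot ℕ)]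
    exact WithBot.add_lt_add_left (by exact_mod_cast WithBot.coe_ne_bot) hslt
  -- each w in the inner set for f is ≥ r - d + 2
  have hW : ∀ w ∈ {w : ℕ | ∃ k : ℕ, w = ((X ^ k * f) % G).natDegree + 1},
      r - d + 2 ≤ w := by
    rintro w ⟨k, rfl⟩
    rw [hkey k, Polynomial.natDegree_mul hhne (hsne k)]
    have := hsdeg k
    omega
  have hWne : {w : ℕ | ∃ k : ℕ, w = ((X ^ k * f) % G).natDegree + 1}.Nonempty :=
    ⟨((X ^ 0 * f) % G).natDegree + 1, 0, rfl⟩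
  have hvge : r - d + 2 ≤ sInf {w : ℕ | ∃ k : ℕ, w = ((X ^ k * f) % G).natDegree + 1} :=
    le_csInf hWne hW
  -- membership of v in the outer set
  set S := {v : ℕ | ∃ f : Polynomial (ZMod 2), f ≠ 0 ∧ f.natDegree < r ∧
      v = sInf {w : ℕ | ∃ k : ℕ, w = ((X ^ k * f) % G).natDegree + 1}} with hSdef
  have hmemS : sInf {w : ℕ | ∃ k : ℕ, w = ((X ^ k * f) % G).natDegree + 1} ∈ S :=
    ⟨f, hfne, hfdeg, rfl⟩
  -- S is bounded above by r
  have hbdd : BddAbove S := by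
    refine ⟨r, ?_⟩
    rintro v ⟨f', hf'ne, hf'deg, rfl⟩
    have hmem0 : ((X ^ 0 * f') % G).natDegree + 1 ∈
        {w : ℕ | ∃ k : ℕ, w = ((X ^ k * f') % G).natDegree + 1} := ⟨0, rfl⟩
    refine le_trans (Nat.sInf_le hmem0) ?_
    have hGn1 : G ≠ 1 := by
      intro h1
      rw [h1, Polynomial.natDegree_one] at hr
      omega
    have := Polynomial.natDegree_modByMonic_lt (X ^ 0 * f') (hmo _ hGne) hGn1
    rw [← hmod_eq _ _ hGne] at this
    omega
  rw [hb]
  calc r - d + 2 ≤ sInf {w : ℕ | ∃ k : ℕ, w = ((X ^ k * f) % G).natDegree + 1} := hvge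
    _ ≤ sSup S := le_csSup hbdd hmemS
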